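/- Let {Q_j}_{j=0}^N be a satellite configuration of cubes with center Q_0, i.e., each Q_j intersects Q_0 and has sidelength at most that of Q_0. Then for all δ ∈ (0,1), |(∪_j (1+δ)Q_j) \ (∪_j Q_j)| ≤ C_n δ |Q_0|, where C_n depends only on the dimension n. In particular ∪_j Q_j ⊆ 3Q_0 and |∪_j Q_j| ≤ 3^n |Q_0|. -/

import Mathlib

open MeasureTheory Metric Set
open scoped ENNReal

lemma oneD_right (F : Finset ℕ) (c r : ℕ → ℝ) (hr : ∀ j ∈ F, 0 < r j) {δ : ℝ} (hδ : 0 ≤ δ) :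
    volume ((⋃ j ∈ F, Ioc (c j + r j) (c j + r j + δ * r j)) \
        ⋃ j ∈ F, Icc (c j - r j) (c j + r j))
      ≤ ENNReal.ofReal (δ/2) * volume (⋃ j ∈ F, Icc (c j - r j) (c j + r j)) := by
  classical
  rcases F.eq_empty_or_nonempty with hF | hF
  · simp [hF]
  set U : Set ℝ := ⋃ j ∈ F, Icc (c j - r j) (c j + r j) with hU
  have hUc : IsClosed U := by
    refine Set.Finite.isClosed_biUnion F.finite_toSet fun j _ => isClosed_Icc
  have hsub : ∀ j ∈ F, Icc (c j - r j) (c j + r j) ⊆ U := fun j hj =>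
    Set.subset_biUnion_of_mem (u := fun j => Icc (c j - r j) (c j + r j)) hj
  have hqU : ∀ j ∈ F, c j + r j ∈ U := fun j hj =>
    hsub j hj ⟨by linarith [hr j hj], le_refl _⟩
  set Tset : ℕ → Set ℝ := fun j => {t : ℝ | Icc (c j + r j) t ⊆ U} with hTset
  have hne : ∀ j ∈ F, (c j + r j) ∈ Tset j := by
    intro j hj
    simp only [hTset, Set.mem_setOf_eq, Set.Icc_self, Set.singleton_subset_iff]
    exact hqU j hj
  have hbdd : ∀ j, BddAbove (Tset j) := by
    intro j
    refine ⟨max (c j + r j) (F.sup' hF fun m => c m + r m), ?_⟩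
    intro t ht
    rcases le_or_gt t (c j + r j) with h | h
    · exact le_max_of_le_left h
    · have htU : t ∈ U := ht ⟨le_of_lt h, le_refl _⟩
      simp only [hU, Set.mem_iUnion] at htU
      obtain ⟨m, hm, htm⟩ := htU
      exact le_max_of_le_right <| le_trans htm.2 (Finset.le_sup' (fun m => c m + r m) hm)
  set T : ℕ → ℝ := fun j => sSup (Tset j) with hT
  have hTq : ∀ j ∈ F, c j + r j ≤ T j := fun j hj => le_csSup (hbdd j) (hne j hj)
  have hIccT : ∀ j ∈ F, Icc (c j + r j) (T j) ⊆ U := by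
    intro j hj
    have hIco : Ico (c j + r j) (T j) ⊆ U := by
      intro s hs
      obtain ⟨t, htm, hst⟩ := exists_lt_of_lt_csSup ⟨_, hne j hj⟩ hs.2
      exact htm ⟨hs.1, le_of_lt hst⟩
    rcases eq_or_lt_of_le (hTq j hj) with h | h
    · rw [← h, Set.Icc_self, Set.singleton_subset_iff]; exact hqU j hj
    · have := closure_Ico (ne_of_lt h)
      calc Icc (c j + r j) (T j) = closure (Ico (c j + r j) (T j)) := this.symm
        _ ⊆ closure U := closure_mono hIco
        _ = U := hUc.closure_eq
  have hTmax : ∀ j ∈ F, ∀ t, Icc (c j + r j) t ⊆ U → t ≤ T j := fun j hj t ht =>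
    le_csSup (hbdd j) ht
  set TV : Finset ℝ := F.image T with hTV
  have key : ∀ v : ℝ, ∃ j, v ∈ TV → (j ∈ F ∧ T j = v ∧ ∀ j' ∈ F, T j' = v → r j' ≤ r j) := by
    intro v
    by_cases hv : v ∈ TV
    · obtain ⟨j0, hj0, hj0v⟩ := Finset.mem_image.mp hv
      have hne' : (F.filter fun j => T j = v).Nonempty :=
        ⟨j0, Finset.mem_filter.mpr ⟨hj0, hj0v⟩⟩
      obtain ⟨b, hb, hbmax⟩ := Finset.exists_max_image (F.filter fun j => T j = v) r hne'
      refine ⟨b, fun _ => ⟨(Finset.mem_filter.mp hb).1, (Finset.mem_filter.mp hb).2, ?_⟩⟩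
      intro j' hj' hj'v
      exact hbmax j' (Finset.mem_filter.mpr ⟨hj', hj'v⟩)
    · exact ⟨0, fun h => absurd h hv⟩
  choose g hg using key
  -- coverage
  have cover : (⋃ j ∈ F, Ioc (c j + r j) (c j + r j + δ * r j)) \ U ⊆
      ⋃ v ∈ TV, Ioc v (v + δ * r (g v)) := by
    intro x hx
    obtain ⟨hx1, hx2⟩ := hx
    simp only [Set.mem_iUnion] at hx1
    obtain ⟨j, hj, hxj⟩ := hx1
    have hv : T j ∈ TV := Finset.mem_image_of_mem T hj
    obtain ⟨hgF, hgT, hgmax⟩ := hg (T j) hv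
    have hrle : r j ≤ r (g (T j)) := hgmax j hj rfl
    have hxT : T j < x := by
      by_contra h
      exact hx2 (hIccT j hj ⟨le_of_lt hxj.1, not_lt.mp h⟩)
    refine Set.mem_iUnion.mpr ⟨T j, Set.mem_iUnion.mpr ⟨hv, ⟨hxT, ?_⟩⟩⟩
    calc x ≤ c j + r j + δ * r j := hxj.2
      _ ≤ T j + δ * r (g (T j)) := by
          have := hTq j hj
          have := mul_le_mul_of_nonneg_left hrle hδ
          linarith
  -- disjointness of payment intervals
  have keydisj : ∀ v ∈ TV, ∀ w ∈ TV, v < w →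
      Disjoint (Icc (c (g v) - r (g v)) v) (Icc (c (g w) - r (g w)) w) := by
    intro v hv w hw hvw
    obtain ⟨hvF, hvT, _⟩ := hg v hv
    obtain ⟨hwF, hwT, _⟩ := hg w hw
    rw [Set.disjoint_left]
    rintro x ⟨hx1, hx2⟩ ⟨hx3, hx4⟩
    have hcontra : Icc (c (g v) + r (g v)) w ⊆ U := by
      intro s hs
      rcases le_or_gt s v with h | h
      · exact hIccT (g v) hvF ⟨hs.1, by rw [hvT]; exact h⟩
      · rcases le_or_gt s (c (g w) + r (g w)) with h2 | h2
        · exact hsub (g w) hwF ⟨by linarith, h2⟩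
        · exact hIccT (g w) hwF ⟨le_of_lt h2, by rw [hwT]; exact hs.2⟩
    have := hTmax (g v) hvF w hcontra
    rw [hvT] at this
    linarith
  have hdisj : (TV : Set ℝ).PairwiseDisjoint fun v => Icc (c (g v) - r (g v)) v := by
    intro v hv w hw hne'
    rcases lt_or_gt_of_ne hne' with h | h
    · exact keydisj v (by exact_mod_cast hv) w (by exact_mod_cast hw) h
    · exact (keydisj w (by exact_mod_cast hw) v (by exact_mod_cast hv) h).symm
  -- payment intervals inside U
  have hMsub : ∀ v ∈ TV, Icc (c (g v) - r (g v)) v ⊆ U := by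
    intro v hv s hs
    obtain ⟨hvF, hvT, _⟩ := hg v hv
    rcases le_or_gt s (c (g v) + r (g v)) with h | h
    · exact hsub (g v) hvF ⟨hs.1, h⟩
    · exact hIccT (g v) hvF ⟨le_of_lt h, by rw [hvT]; exact hs.2⟩
  -- measure computations
  have step1 : volume ((⋃ j ∈ F, Ioc (c j + r j) (c j + r j + δ * r j)) \ U) ≤
      ∑ v ∈ TV, ENNReal.ofReal (δ * r (g v)) := by
    refine le_trans (measure_mono cover) ?_
    refine le_trans (measure_biUnion_finset_le TV _) ?_
    refine Finset.sum_le_sum fun v hv => ?_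
    rw [Real.volume_Ioc]
    simp
  have step2 : ∀ v ∈ TV, ENNReal.ofReal (2 * r (g v)) ≤
      volume (Icc (c (g v) - r (g v)) v) := by
    intro v hv
    obtain ⟨hvF, hvT, _⟩ := hg v hv
    rw [Real.volume_Icc]
    refine ENNReal.ofReal_le_ofReal ?_
    have h2 := hTq (g v) hvF
    rw [hvT] at h2
    linarith
  have step3 : ∑ v ∈ TV, ENNReal.ofReal (2 * r (g v)) ≤ volume U := by
    calc ∑ v ∈ TV, ENNReal.ofReal (2 * r (g v))
        ≤ ∑ v ∈ TV, volume (Icc (c (g v) - r (g v)) v) := Finset.sum_le_sum step2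
      _ = volume (⋃ v ∈ TV, Icc (c (g v) - r (g v)) v) :=
          (measure_biUnion_finset hdisj fun v _ => measurableSet_Icc).symm
      _ ≤ volume U := measure_mono (Set.iUnion₂_subset hMsub)
  calc volume ((⋃ j ∈ F, Ioc (c j + r j) (c j + r j + δ * r j)) \ U)
      ≤ ∑ v ∈ TV, ENNReal.ofReal (δ * r (g v)) := step1
    _ = ∑ v ∈ TV, ENNReal.ofReal (δ/2) * ENNReal.ofReal (2 * r (g v)) := by
        refine Finset.sum_congr rfl fun v hv => ?_
        rw [← ENNReal.ofReal_mul (by linarith)]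
        ring_nf
    _ = ENNReal.ofReal (δ/2) * ∑ v ∈ TV, ENNReal.ofReal (2 * r (g v)) := by
        rw [Finset.mul_sum]
    _ ≤ ENNReal.ofReal (δ/2) * volume U := mul_le_mul_right step3 _

lemma oneD (F : Finset ℕ) (c r : ℕ → ℝ) (hr : ∀ j ∈ F, 0 < r j) {δ : ℝ} (hδ : 0 ≤ δ) :
    volume ((⋃ j ∈ F, Icc (c j - (1+δ) * r j) (c j + (1+δ) * r j)) \
        ⋃ j ∈ F, Icc (c j - r j) (c j + r j))
      ≤ ENNReal.ofReal δ * volume (⋃ j ∈ F, Icc (c j - r j) (c j + r j)) := by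
  classical
  set U : Set ℝ := ⋃ j ∈ F, Icc (c j - r j) (c j + r j) with hU
  have hsub : ∀ j ∈ F, Icc (c j - r j) (c j + r j) ⊆ U := fun j hj =>
    Set.subset_biUnion_of_mem (u := fun j => Icc (c j - r j) (c j + r j)) hj
  set RR : Set ℝ := ⋃ j ∈ F, Ioc (c j + r j) (c j + r j + δ * r j) with hRR
  set LL : Set ℝ := ⋃ j ∈ F, Ico (c j - r j - δ * r j) (c j - r j) with hLL
  have hcover : (⋃ j ∈ F, Icc (c j - (1+δ) * r j) (c j + (1+δ) * r j)) \ U ⊆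
      (RR \ U) ∪ (LL \ U) := by
    rintro x ⟨hx1, hx2⟩
    simp only [Set.mem_iUnion] at hx1
    obtain ⟨j, hj, hxj⟩ := hx1
    rcases lt_or_ge x (c j - r j) with h | h
    · refine Or.inr ⟨Set.mem_biUnion hj ⟨?_, h⟩, hx2⟩
      have := hxj.1; linarith [hr j hj]
    rcases le_or_gt x (c j + r j) with h2 | h2
    · exact absurd (hsub j hj ⟨h, h2⟩) hx2
    · refine Or.inl ⟨Set.mem_biUnion hj ⟨h2, ?_⟩, hx2⟩
      have := hxj.2; linarith [hr j hj]
  have hright : volume (RR \ U) ≤ ENNReal.ofReal (δ/2) * volume U :=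
    oneD_right F c r hr hδ
  have hleft : volume (LL \ U) ≤ ENNReal.ofReal (δ/2) * volume U := by
    have hset : LL \ U = Neg.neg ⁻¹'
        ((⋃ j ∈ F, Ioc (-(c j) + r j) (-(c j) + r j + δ * r j)) \
          ⋃ j ∈ F, Icc (-(c j) - r j) (-(c j) + r j)) := by
      rw [Set.preimage_diff]
      congr 1
      · ext x
        simp only [hLL, Set.mem_iUnion, Set.mem_preimage, Set.mem_Ioc, Set.mem_Ico]
        constructor
        · rintro ⟨j, hj, h1, h2⟩; exact ⟨j, hj, by linarith, by linarith⟩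
        · rintro ⟨j, hj, h1, h2⟩; exact ⟨j, hj, by linarith, by linarith⟩
      · ext x
        simp only [hU, Set.mem_iUnion, Set.mem_preimage, Set.mem_Icc]
        constructor
        · rintro ⟨j, hj, h1, h2⟩; exact ⟨j, hj, by linarith, by linarith⟩
        · rintro ⟨j, hj, h1, h2⟩; exact ⟨j, hj, by linarith, by linarith⟩
    have hUset : Neg.neg ⁻¹' (⋃ j ∈ F, Icc (-(c j) - r j) (-(c j) + r j)) = U := by
      ext x
      simp only [hU, Set.mem_iUnion, Set.mem_preimage, Set.mem_Icc]
      constructor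
      · rintro ⟨j, hj, h1, h2⟩; exact ⟨j, hj, by linarith, by linarith⟩
      · rintro ⟨j, hj, h1, h2⟩; exact ⟨j, hj, by linarith, by linarith⟩
    rw [hset, Measure.measure_preimage_neg]
    have := oneD_right F (fun j => -(c j)) r hr hδ
    calc volume ((⋃ j ∈ F, Ioc (-(c j) + r j) (-(c j) + r j + δ * r j)) \
          ⋃ j ∈ F, Icc (-(c j) - r j) (-(c j) + r j))
        ≤ ENNReal.ofReal (δ/2) *
            volume (⋃ j ∈ F, Icc (-(c j) - r j) (-(c j) + r j)) := this
      _ = ENNReal.ofReal (δ/2) * volume U := by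
          rw [← hUset, Measure.measure_preimage_neg]
  calc volume ((⋃ j ∈ F, Icc (c j - (1+δ) * r j) (c j + (1+δ) * r j)) \ U)
      ≤ volume ((RR \ U) ∪ (LL \ U)) := measure_mono hcover
    _ ≤ volume (RR \ U) + volume (LL \ U) := measure_union_le _ _
    _ ≤ ENNReal.ofReal (δ/2) * volume U + ENNReal.ofReal (δ/2) * volume U :=
        add_le_add hright hleft
    _ = ENNReal.ofReal δ * volume U := by
        rw [← add_mul, ← ENNReal.ofReal_add (by linarith) (by linarith)]
        ring_nf

lemma prodStep {Y : Type*} [MeasureSpace Y] [SigmaFinite (volume : Measure Y)]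
    (F : Finset ℕ) (c r : ℕ → ℝ) (hr : ∀ j ∈ F, 0 < r j) (S : ℕ → Set Y)
    (hS : ∀ j, MeasurableSet (S j)) {δ : ℝ} (hδ : 0 ≤ δ) :
    volume ((⋃ j ∈ F, S j ×ˢ Icc (c j - (1+δ) * r j) (c j + (1+δ) * r j)) \
        ⋃ j ∈ F, S j ×ˢ Icc (c j - r j) (c j + r j))
      ≤ ENNReal.ofReal δ * volume (⋃ j ∈ F, S j ×ˢ Icc (c j - r j) (c j + r j)) := by
  classical
  have hmeas : ∀ (a b : ℕ → ℝ), MeasurableSet (⋃ j ∈ F, S j ×ˢ Icc (a j) (b j)) := by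
    intro a b
    exact Set.Finite.measurableSet_biUnion F.finite_toSet fun j _ =>
      (hS j).prod measurableSet_Icc
  have hslice : ∀ (y : Y) (a b : ℕ → ℝ),
      Prod.mk y ⁻¹' (⋃ j ∈ F, S j ×ˢ Icc (a j) (b j)) =
        ⋃ j ∈ F.filter (fun j => y ∈ S j), Icc (a j) (b j) := by
    intro y a b
    ext x
    simp only [Set.mem_preimage, Set.mem_iUnion, Set.mem_prod, Finset.mem_filter]
    tauto
  have hA' := hmeas (fun j => c j - (1+δ) * r j) (fun j => c j + (1+δ) * r j)
  have hA := hmeas (fun j => c j - r j) (fun j => c j + r j)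
  rw [Measure.volume_eq_prod, Measure.prod_apply (hA'.diff hA), Measure.prod_apply hA]
  rw [← lintegral_const_mul' _ _ ENNReal.ofReal_ne_top]
  refine lintegral_mono fun y => ?_
  rw [Set.preimage_diff, hslice, hslice]
  exact oneD (F.filter (fun j => y ∈ S j)) c r
    (fun j hj => hr j (Finset.mem_filter.mp hj).1) hδ

lemma pi_ft_eq {κ : Type*} (ft1 ft2 : Fintype κ) :
    @Measure.pi κ (fun _ => ℝ) ft1 (fun _ => inferInstance) (fun _ => volume) =
    @Measure.pi κ (fun _ => ℝ) ft2 (fun _ => inferInstance) (fun _ => volume) := by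
  obtain rfl := Subsingleton.elim ft1 ft2
  rfl

def stageBox (n : ℕ) (c : ℕ → Fin n → ℝ) (r : ℕ → ℝ) (δ : ℝ) (k j : ℕ) :
    Set (Fin n → ℝ) :=
  {x | ∀ i' : Fin n, x i' ∈
    Icc (c j i' - (if (i' : ℕ) < k then (1+δ) * r j else r j))
        (c j i' + (if (i' : ℕ) < k then (1+δ) * r j else r j))}

lemma stageBox_measurable (n : ℕ) (c : ℕ → Fin n → ℝ) (r : ℕ → ℝ) (δ : ℝ) (k j : ℕ) :
    MeasurableSet (stageBox n c r δ k j) := by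
  have : stageBox n c r δ k j = ⋂ i' : Fin n, (fun x : Fin n → ℝ => x i') ⁻¹'
      (Icc (c j i' - (if (i' : ℕ) < k then (1+δ) * r j else r j))
          (c j i' + (if (i' : ℕ) < k then (1+δ) * r j else r j))) := by
    ext x; simp [stageBox]
  rw [this]
  exact MeasurableSet.iInter fun i' => (measurable_pi_apply i') measurableSet_Icc

lemma piStep (n : ℕ) (F : Finset ℕ) (c : ℕ → Fin n → ℝ) (r : ℕ → ℝ)
    (hr : ∀ j ∈ F, 0 < r j) {δ : ℝ} (hδ : 0 ≤ δ) (k : ℕ) (hk : k < n) :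
    volume ((⋃ j ∈ F, stageBox n c r δ (k+1) j) \ ⋃ j ∈ F, stageBox n c r δ k j)
      ≤ ENNReal.ofReal δ * volume (⋃ j ∈ F, stageBox n c r δ k j) := by
  classical
  set i : Fin n := ⟨k, hk⟩ with hi
  letI hu : Unique {m : Fin n // ¬ m ≠ i} :=
    ⟨⟨⟨i, not_not_intro rfl⟩⟩, fun a => Subtype.ext (not_not.mp a.2)⟩
  set e₁ := MeasurableEquiv.piEquivPiSubtypeProd (fun _ : Fin n => ℝ) (fun m => m ≠ i)
    with he₁
  set ψ : ({m : Fin n // m ≠ i} → ℝ) × ({m : Fin n // ¬ m ≠ i} → ℝ) →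
      ({m : Fin n // m ≠ i} → ℝ) × ℝ :=
    Prod.map id (MeasurableEquiv.funUnique {m : Fin n // ¬ m ≠ i} ℝ) with hψ
  have hφ : MeasurePreserving (ψ ∘ e₁) volume volume := by
    have h1 : MeasurePreserving e₁ volume volume :=
      MeasureTheory.volume_preserving_piEquivPiSubtypeProd (fun _ : Fin n => ℝ) _
    have h2 : MeasurePreserving ψ volume volume := by
      rw [Measure.volume_eq_prod, Measure.volume_eq_prod]
      refine (MeasurePreserving.id _).prod ?_
      have h3 := MeasureTheory.measurePreserving_funUnique (volume : Measure ℝ)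
        {m : Fin n // ¬ m ≠ i}
      convert h3 using 1
      · rfl
      · exact pi_ft_eq _ _
    exact h2.comp h1
  have hφx : ∀ x : Fin n → ℝ,
      (ψ ∘ e₁) x = (fun m : {m : Fin n // m ≠ i} => x m.1, x i) := fun x => rfl
  -- lateral sets
  set SL : ℕ → Set ({m : Fin n // m ≠ i} → ℝ) := fun j =>
    {x' | ∀ m : {m : Fin n // m ≠ i}, x' m ∈
      Icc (c j m.1 - (if (m.1 : ℕ) < k then (1+δ) * r j else r j))
          (c j m.1 + (if (m.1 : ℕ) < k then (1+δ) * r j else r j))} with hSL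
  have hSLmeas : ∀ j, MeasurableSet (SL j) := by
    intro j
    have : SL j = ⋂ m : {m : Fin n // m ≠ i}, (fun x' : {m : Fin n // m ≠ i} → ℝ => x' m) ⁻¹'
        (Icc (c j m.1 - (if (m.1 : ℕ) < k then (1+δ) * r j else r j))
            (c j m.1 + (if (m.1 : ℕ) < k then (1+δ) * r j else r j))) := by
      ext x'; simp [hSL]
    rw [this]
    exact MeasurableSet.iInter fun m => (measurable_pi_apply m) measurableSet_Icc
  have hradeq : ∀ (j : ℕ) (m : Fin n), (m : ℕ) ≠ k →
      (if (m : ℕ) < k + 1 then (1+δ) * r j else r j)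
        = (if (m : ℕ) < k then (1+δ) * r j else r j) := by
    intro j m hm
    by_cases hlt : (m : ℕ) < k
    · rw [if_pos hlt, if_pos (by omega)]
    · rw [if_neg hlt, if_neg (by omega)]
  have hval : ∀ m : Fin n, m ≠ i → (m : ℕ) ≠ k := by
    intro m hm h
    exact hm (Fin.ext h)
  -- preimage identities
  have hpre1 : (ψ ∘ e₁) ⁻¹'
      (⋃ j ∈ F, SL j ×ˢ Icc (c j i - (1+δ) * r j) (c j i + (1+δ) * r j)) =
      ⋃ j ∈ F, stageBox n c r δ (k+1) j := by
    ext x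
    rw [Set.mem_preimage, hφx]
    simp only [Set.mem_iUnion, Set.mem_prod, hSL, Set.mem_setOf_eq, stageBox]
    constructor
    · rintro ⟨j, hj, h1, h2⟩
      refine ⟨j, hj, fun i' => ?_⟩
      by_cases h : i' = i
      · subst h
        simpa [hi, Nat.lt_succ_self] using h2
      · rw [hradeq j i' (hval i' h)]
        exact h1 ⟨i', h⟩
    · rintro ⟨j, hj, h1⟩
      refine ⟨j, hj, fun m => ?_, ?_⟩
      · rw [← hradeq j m.1 (hval m.1 m.2)]
        exact h1 m.1
      · have := h1 i
        simpa [hi, Nat.lt_succ_self] using this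
  have hpre0 : (ψ ∘ e₁) ⁻¹'
      (⋃ j ∈ F, SL j ×ˢ Icc (c j i - r j) (c j i + r j)) =
      ⋃ j ∈ F, stageBox n c r δ k j := by
    ext x
    rw [Set.mem_preimage, hφx]
    simp only [Set.mem_iUnion, Set.mem_prod, hSL, Set.mem_setOf_eq, stageBox]
    constructor
    · rintro ⟨j, hj, h1, h2⟩
      refine ⟨j, hj, fun i' => ?_⟩
      by_cases h : i' = i
      · subst h
        simpa [hi] using h2
      · exact h1 ⟨i', h⟩
    · rintro ⟨j, hj, h1⟩
      refine ⟨j, hj, fun m => h1 m.1, ?_⟩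
      have := h1 i
      simpa [hi] using this
  have hmeas1 : MeasurableSet
      (⋃ j ∈ F, SL j ×ˢ Icc (c j i - (1+δ) * r j) (c j i + (1+δ) * r j)) :=
    Set.Finite.measurableSet_biUnion F.finite_toSet fun j _ =>
      (hSLmeas j).prod measurableSet_Icc
  have hmeas0 : MeasurableSet (⋃ j ∈ F, SL j ×ˢ Icc (c j i - r j) (c j i + r j)) :=
    Set.Finite.measurableSet_biUnion F.finite_toSet fun j _ =>
      (hSLmeas j).prod measurableSet_Icc
  have key := prodStep F (fun j => c j i) r hr SL hSLmeas hδ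
  calc volume ((⋃ j ∈ F, stageBox n c r δ (k+1) j) \ ⋃ j ∈ F, stageBox n c r δ k j)
      = volume ((ψ ∘ e₁) ⁻¹'
          ((⋃ j ∈ F, SL j ×ˢ Icc (c j i - (1+δ) * r j) (c j i + (1+δ) * r j)) \
            ⋃ j ∈ F, SL j ×ˢ Icc (c j i - r j) (c j i + r j))) := by
        rw [Set.preimage_diff, hpre1, hpre0]
    _ = volume ((⋃ j ∈ F, SL j ×ˢ Icc (c j i - (1+δ) * r j) (c j i + (1+δ) * r j)) \
            ⋃ j ∈ F, SL j ×ˢ Icc (c j i - r j) (c j i + r j)) :=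
        hφ.measure_preimage (hmeas1.diff hmeas0).nullMeasurableSet
    _ ≤ ENNReal.ofReal δ * volume (⋃ j ∈ F, SL j ×ˢ Icc (c j i - r j) (c j i + r j)) :=
        key
    _ = ENNReal.ofReal δ * volume (⋃ j ∈ F, stageBox n c r δ k j) := by
        rw [← hpre0, hφ.measure_preimage hmeas0.nullMeasurableSet]

lemma ball_eq_box (n : ℕ) (y : Fin n → ℝ) (ρ : ℝ) (hρ : 0 ≤ ρ) :
    closedBall y ρ = {x : Fin n → ℝ | ∀ i' : Fin n, x i' ∈ Icc (y i' - ρ) (y i' + ρ)} := by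
  ext x
  rw [mem_closedBall, dist_pi_le_iff hρ]
  simp only [Set.mem_setOf_eq, Set.mem_Icc, Real.dist_eq]
  constructor <;> intro h i' <;> have := h i'
  · rw [abs_le] at this
    constructor <;> linarith [this.1, this.2]
  · rw [abs_le]
    constructor <;> linarith [this.1, this.2]

theorem satellite_enlargement_estimate (n : ℕ) :
    ∃ C : ℝ, 0 < C ∧
      ∀ (N : ℕ) (c : ℕ → (Fin n → ℝ)) (r : ℕ → ℝ),
        (∀ j ≤ N, 0 < r j) →
        (∀ j ≤ N, (closedBall (c j) (r j) ∩ closedBall (c 0) (r 0)).Nonempty ∧ r j ≤ r 0) →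
        (∀ δ : ℝ, 0 < δ → δ < 1 →
          volume ((⋃ j ∈ Finset.range (N + 1), closedBall (c j) ((1 + δ) * r j)) \
              ⋃ j ∈ Finset.range (N + 1), closedBall (c j) (r j)) ≤
            ENNReal.ofReal (C * δ) * volume (closedBall (c 0) (r 0))) ∧
        (⋃ j ∈ Finset.range (N + 1), closedBall (c j) (r j)) ⊆ closedBall (c 0) (3 * r 0) ∧
        volume (⋃ j ∈ Finset.range (N + 1), closedBall (c j) (r j)) ≤
          (3 : ℝ≥0∞) ^ n * volume (closedBall (c 0) (r 0)) := by
  classical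
  refine ⟨n * 4 ^ n + 1, by positivity, ?_⟩
  intro N c r hr hsat
  set F := Finset.range (N + 1) with hF
  have hmem : ∀ j, j ∈ F ↔ j ≤ N := fun j => Finset.mem_range_succ_iff
  have hrF : ∀ j ∈ F, 0 < r j := fun j hj => hr j ((hmem j).mp hj)
  have h0F : (0 : ℕ) ∈ F := (hmem 0).mpr (Nat.zero_le N)
  have hr0 : 0 < r 0 := hr 0 (Nat.zero_le N)
  have hdist : ∀ j ∈ F, dist (c j) (c 0) ≤ r j + r 0 := by
    intro j hj
    obtain ⟨⟨x, hx1, hx2⟩, _⟩ := hsat j ((hmem j).mp hj)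
    calc dist (c j) (c 0) ≤ dist (c j) x + dist x (c 0) := dist_triangle _ _ _
      _ ≤ r j + r 0 := add_le_add (by rw [dist_comm]; exact hx1) hx2
  have hrle : ∀ j ∈ F, r j ≤ r 0 := fun j hj => (hsat j ((hmem j).mp hj)).2
  have hsubset : (⋃ j ∈ F, closedBall (c j) (r j)) ⊆ closedBall (c 0) (3 * r 0) := by
    intro x hx
    simp only [Set.mem_iUnion] at hx
    obtain ⟨j, hj, hxj⟩ := hx
    rw [mem_closedBall] at hxj ⊢
    calc dist x (c 0) ≤ dist x (c j) + dist (c j) (c 0) := dist_triangle _ _ _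
      _ ≤ r j + (r j + r 0) := add_le_add hxj (hdist j hj)
      _ ≤ 3 * r 0 := by have := hrle j hj; linarith
  have hvol0 : volume (closedBall (c 0) (r 0)) = ENNReal.ofReal ((2 * r 0) ^ n) := by
    rw [Real.volume_pi_closedBall _ hr0.le, Fintype.card_fin]
  refine ⟨?_, hsubset, ?_⟩
  · -- main estimate
    intro δ hδ0 hδ1
    have hδ : (0 : ℝ) ≤ δ := hδ0.le
    -- convert balls to stage boxes
    have hball1 : ∀ j ∈ F, closedBall (c j) (r j) = stageBox n c r δ 0 j := by
      intro j hj
      rw [ball_eq_box n (c j) (r j) (hrF j hj).le]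
      simp [stageBox]
    have hball2 : ∀ j ∈ F, closedBall (c j) ((1 + δ) * r j) = stageBox n c r δ n j := by
      intro j hj
      rw [ball_eq_box n (c j) ((1 + δ) * r j) (by nlinarith [hrF j hj])]
      simp [stageBox, Fin.is_lt]
    have hU0 : (⋃ j ∈ F, closedBall (c j) (r j)) = ⋃ j ∈ F, stageBox n c r δ 0 j :=
      Set.iUnion₂_congr hball1
    have hUn : (⋃ j ∈ F, closedBall (c j) ((1 + δ) * r j)) =
        ⋃ j ∈ F, stageBox n c r δ n j :=
      Set.iUnion₂_congr hball2
    -- all stages inside a big ball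
    have hsub4 : ∀ k, (⋃ j ∈ F, stageBox n c r δ k j) ⊆ closedBall (c 0) (4 * r 0) := by
      intro k x hx
      simp only [Set.mem_iUnion] at hx
      obtain ⟨j, hj, hxj⟩ := hx
      have hrj := hrF j hj
      have hrj0 := hrle j hj
      rw [mem_closedBall]
      have hxc : dist x (c j) ≤ 2 * r 0 := by
        rw [dist_pi_le_iff (by linarith)]
        intro i'
        have := hxj i'
        rw [Set.mem_Icc] at this
        rw [Real.dist_eq, abs_le]
        by_cases h : (i' : ℕ) < k
        · rw [if_pos h] at this
          constructor <;> nlinarith [this.1, this.2]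
        · rw [if_neg h] at this
          constructor <;> nlinarith [this.1, this.2]
      calc dist x (c 0) ≤ dist x (c j) + dist (c j) (c 0) := dist_triangle _ _ _
        _ ≤ 2 * r 0 + (r j + r 0) := add_le_add hxc (hdist j hj)
        _ ≤ 4 * r 0 := by linarith
    set V := volume (closedBall (c 0) (4 * r 0)) with hV
    have hVval : V = ENNReal.ofReal ((8 * r 0) ^ n) := by
      rw [hV, Real.volume_pi_closedBall _ (by linarith), Fintype.card_fin,
        show (2 * (4 * r 0) : ℝ) = 8 * r 0 by ring]
    -- telescoping
    have tele : ∀ m, m ≤ n →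
        volume ((⋃ j ∈ F, stageBox n c r δ m j) \ ⋃ j ∈ F, stageBox n c r δ 0 j) ≤
          (m : ℝ≥0∞) * (ENNReal.ofReal δ * V) := by
      intro m
      induction m with
      | zero => intro _; simp
      | succ m ih =>
        intro hm
        have hmn : m < n := hm
        have hsplit : (⋃ j ∈ F, stageBox n c r δ (m+1) j) \ (⋃ j ∈ F, stageBox n c r δ 0 j) ⊆
            ((⋃ j ∈ F, stageBox n c r δ (m+1) j) \ ⋃ j ∈ F, stageBox n c r δ m j) ∪
            ((⋃ j ∈ F, stageBox n c r δ m j) \ ⋃ j ∈ F, stageBox n c r δ 0 j) := by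
          rintro x ⟨hx1, hx2⟩
          by_cases h : x ∈ ⋃ j ∈ F, stageBox n c r δ m j
          · exact Or.inr ⟨h, hx2⟩
          · exact Or.inl ⟨hx1, h⟩
        calc volume ((⋃ j ∈ F, stageBox n c r δ (m+1) j) \ ⋃ j ∈ F, stageBox n c r δ 0 j)
            ≤ volume (((⋃ j ∈ F, stageBox n c r δ (m+1) j) \ ⋃ j ∈ F, stageBox n c r δ m j) ∪
              ((⋃ j ∈ F, stageBox n c r δ m j) \ ⋃ j ∈ F, stageBox n c r δ 0 j)) :=
              measure_mono hsplit
          _ ≤ volume ((⋃ j ∈ F, stageBox n c r δ (m+1) j) \ ⋃ j ∈ F, stageBox n c r δ m j) +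
              volume ((⋃ j ∈ F, stageBox n c r δ m j) \ ⋃ j ∈ F, stageBox n c r δ 0 j) :=
              measure_union_le _ _
          _ ≤ ENNReal.ofReal δ * volume (⋃ j ∈ F, stageBox n c r δ m j) +
              (m : ℝ≥0∞) * (ENNReal.ofReal δ * V) :=
              add_le_add (piStep n F c r hrF hδ m hmn) (ih (Nat.le_of_lt hmn))
          _ ≤ ENNReal.ofReal δ * V + (m : ℝ≥0∞) * (ENNReal.ofReal δ * V) :=
              add_le_add_left (mul_le_mul_right (measure_mono (hsub4 m)) _) _
          _ = ((m + 1 : ℕ) : ℝ≥0∞) * (ENNReal.ofReal δ * V) := by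
              push_cast
              ring
    have main := tele n le_rfl
    rw [← hU0, ← hUn] at main
    refine le_trans main ?_
    rw [hVval, hvol0]
    rw [← ENNReal.ofReal_natCast n, ← ENNReal.ofReal_mul (by positivity),
      ← ENNReal.ofReal_mul (by positivity), ← ENNReal.ofReal_mul (by positivity)]
    refine ENNReal.ofReal_le_ofReal ?_
    have hpow : (8 * r 0 : ℝ) ^ n = 4 ^ n * (2 * r 0) ^ n := by
      rw [← mul_pow, show (4 * (2 * r 0) : ℝ) = 8 * r 0 by ring]
    have h2 : (0:ℝ) ≤ (2 * r 0) ^ n := by positivity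
    calc (n : ℝ) * (δ * (8 * r 0) ^ n) = (n : ℝ) * 4 ^ n * δ * (2 * r 0) ^ n := by
          rw [hpow]; ring
      _ ≤ ((n : ℝ) * 4 ^ n + 1) * δ * (2 * r 0) ^ n := by
          have : (n : ℝ) * 4 ^ n ≤ (n : ℝ) * 4 ^ n + 1 := by linarith
          have h3 : (0:ℝ) ≤ δ * (2 * r 0) ^ n := by positivity
          nlinarith
      _ = (n : ℝ) * 4 ^ n * δ * (2 * r 0) ^ n + δ * (2 * r 0) ^ n := by ring
      _ = ((n : ℝ) * 4 ^ n + 1) * δ * (2 * r 0) ^ n := by ring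
  · -- volume bound
    calc volume (⋃ j ∈ F, closedBall (c j) (r j))
        ≤ volume (closedBall (c 0) (3 * r 0)) := measure_mono hsubset
      _ = ENNReal.ofReal ((2 * (3 * r 0)) ^ n) := by
          rw [Real.volume_pi_closedBall _ (by linarith), Fintype.card_fin]
      _ = (3 : ℝ≥0∞) ^ n * volume (closedBall (c 0) (r 0)) := by
          rw [hvol0]
          rw [show (2 * (3 * r 0) : ℝ) = 3 * (2 * r 0) by ring, mul_pow,
            ENNReal.ofReal_mul (by positivity), ENNReal.ofReal_pow (by norm_num)]
          norm_num
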